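/- Let A be a symmetric sequence of length n with entries in {±1}. If PSD_A(s) > 4n for some integer s, then there do not exist sequences B, C, D such that A, B, C, D form a Williamson sequence. -/

import Mathlib

open Finset Complex

/-- The periodic autocorrelation function of the length-`n` sequence `a`. -/
def paf (n : ℕ) (a : ℕ → ℤ) (s : ℕ) : ℤ :=
  ∑ k ∈ Finset.range n, a k * a ((k + s) % n)

/-- `a` is a symmetric sequence of length `n`: `aᵢ = a_{n-i}` for `1 ≤ i < n`. -/
def SymmSeq (n : ℕ) (a : ℕ → ℤ) : Prop := ∀ i, 1 ≤ i → i < n → a i = a (n - i)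

/-- All entries of the length-`n` sequence `a` are `±1`. -/
def PMOne (n : ℕ) (a : ℕ → ℤ) : Prop := ∀ i < n, a i = 1 ∨ a i = -1

/-- `a,b,c,d` are Williamson sequences of order `n`. -/
def IsWilliamson (n : ℕ) (a b c d : ℕ → ℤ) : Prop :=
  SymmSeq n a ∧ SymmSeq n b ∧ SymmSeq n c ∧ SymmSeq n d ∧
  PMOne n a ∧ PMOne n b ∧ PMOne n c ∧ PMOne n d ∧
  ∀ s, 1 ≤ s → s ≤ n / 2 → paf n a s + paf n b s + paf n c s + paf n d s = 0

/-- The discrete Fourier transform of the length-`n` sequence `a`. -/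
noncomputable def dft (n : ℕ) (a : ℕ → ℤ) (s : ℤ) : ℂ :=
  ∑ k ∈ Finset.range n, (a k : ℂ) * Complex.exp (2 * Real.pi * Complex.I * k * s / n)

/-- The power spectral density of the length-`n` sequence `a`. -/
noncomputable def psd (n : ℕ) (a : ℕ → ℤ) (s : ℤ) : ℝ :=
  ‖dft n a s‖ ^ 2

lemma sum_range_zmod {M : Type*} [AddCommMonoid M] (n : ℕ) [NeZero n] (h : ZMod n → M) :
    ∑ k ∈ Finset.range n, h (k : ZMod n) = ∑ x : ZMod n, h x := by
  refine Finset.sum_nbij' (fun k => (k : ZMod n)) (fun x => x.val) ?_ ?_ ?_ ?_ ?_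
  · intro k _; exact Finset.mem_univ _
  · intro x _; exact Finset.mem_range.mpr (ZMod.val_lt x)
  · intro k hk; exact ZMod.val_cast_of_lt (Finset.mem_range.mp hk)
  · intro x _; exact ZMod.natCast_rightInverse x
  · intro k _; rfl

lemma sum_shift {M : Type*} [AddCommMonoid M] (n : ℕ) [NeZero n] (j : ℕ) (f : ℕ → M) :
    ∑ k ∈ Finset.range n, f ((j + k) % n) = ∑ k ∈ Finset.range n, f k := by
  have key : ∀ k : ℕ, (j + k) % n = (((j : ZMod n) + (k : ZMod n)).val) := by
    intro k
    rw [ZMod.val_add, ZMod.val_natCast, ZMod.val_natCast, Nat.add_mod]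
  calc ∑ k ∈ Finset.range n, f ((j + k) % n)
      = ∑ k ∈ Finset.range n, (fun x : ZMod n => f ((( j : ZMod n) + x).val)) (k : ZMod n) := by
        refine Finset.sum_congr rfl fun k _ => ?_
        simp only [key k]
    _ = ∑ x : ZMod n, f (((j : ZMod n) + x).val) :=
        sum_range_zmod n (fun x : ZMod n => f (((j : ZMod n) + x).val))
    _ = ∑ x : ZMod n, f (x.val) := Fintype.sum_equiv (Equiv.addLeft (j : ZMod n)) _ _ (fun x => rfl)
    _ = ∑ k ∈ Finset.range n, (fun x : ZMod n => f x.val) (k : ZMod n) :=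
        (sum_range_zmod n (fun x : ZMod n => f x.val)).symm
    _ = ∑ k ∈ Finset.range n, f k := by
        refine Finset.sum_congr rfl fun k hk => ?_
        simp [ZMod.val_cast_of_lt (Finset.mem_range.mp hk)]

lemma paf_zero (n : ℕ) (a : ℕ → ℤ) (hpa : PMOne n a) : paf n a 0 = n := by
  unfold paf
  have h1 : ∀ k ∈ Finset.range n, a k * a ((k + 0) % n) = 1 := by
    intro k hk
    have hk' := Finset.mem_range.mp hk
    rw [Nat.add_zero, Nat.mod_eq_of_lt hk']
    rcases hpa k hk' with h | h <;> simp [h]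
  rw [Finset.sum_congr rfl h1]
  simp

lemma paf_reflect (n : ℕ) [NeZero n] (a : ℕ → ℤ) (t : ℕ) (ht1 : 1 ≤ t) (ht2 : t < n) :
    paf n a (n - t) = paf n a t := by
  unfold paf
  have := sum_shift n t (fun k => a k * a ((k + (n - t)) % n))
  rw [← this]
  refine Finset.sum_congr rfl fun k hk => ?_
  have hk' := Finset.mem_range.mp hk
  have h2 : t + k + (n - t) = k + n := by omega
  have h1 : ((t + k) % n + (n - t)) % n = k := by
    rw [Nat.mod_add_mod, h2, Nat.add_mod_right, Nat.mod_eq_of_lt hk']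
  rw [h1, mul_comm, Nat.add_comm t k]

lemma psd_eq (n : ℕ) [NeZero n] (a : ℕ → ℤ) (s : ℤ) :
    (psd n a s : ℂ) = ∑ t ∈ Finset.range n,
      (paf n a t : ℂ) * Complex.exp (2 * Real.pi * Complex.I * t * s / n) := by
  have hn : (n : ℂ) ≠ 0 := Nat.cast_ne_zero.mpr (NeZero.ne n)
  set E : ℤ → ℂ := fun m => Complex.exp (2 * Real.pi * Complex.I * m * s / n) with hE
  have hE_add : ∀ m m' : ℤ, E (m + m') = E m * E m' := by
    intro m m'
    simp only [hE]
    rw [← Complex.exp_add]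
    congr 1
    push_cast
    ring
  have hE_per : ∀ q : ℤ, E ((n : ℤ) * q) = 1 := by
    intro q
    simp only [hE]
    have : 2 * (Real.pi : ℂ) * Complex.I * ((n : ℤ) * q : ℤ) * s / n
        = (q * s : ℤ) * (2 * Real.pi * Complex.I) := by
      push_cast
      field_simp
    rw [this, Complex.exp_int_mul_two_pi_mul_I]
  have hE_shift : ∀ (m : ℤ) (q : ℤ), E (m + (n : ℤ) * q) = E m := by
    intro m q
    rw [hE_add, hE_per, mul_one]
  have hE_zero : E 0 = 1 := by simp [hE]
  have hE_conj : ∀ m : ℤ, (starRingEnd ℂ) (E m) = E (-m) := by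
    intro m
    simp only [hE]
    rw [← Complex.exp_conj]
    congr 1
    simp [map_div₀, map_mul, Complex.conj_I, map_ofNat]
  have hdft : dft n a s = ∑ k ∈ Finset.range n, (a k : ℂ) * E (k : ℤ) := by
    unfold dft
    refine Finset.sum_congr rfl fun k _ => ?_
    simp only [hE]
    norm_num
  have hconj : (starRingEnd ℂ) (dft n a s) = ∑ k ∈ Finset.range n, (a k : ℂ) * E (-(k : ℤ)) := by
    rw [hdft, map_sum]
    refine Finset.sum_congr rfl fun k _ => ?_
    rw [map_mul, hE_conj]
    simp
  have habs : (psd n a s : ℂ) = dft n a s * (starRingEnd ℂ) (dft n a s) := by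
    unfold psd
    rw [Complex.sq_norm, Complex.mul_conj]
  rw [habs, mul_comm, hconj, hdft, Finset.sum_mul_sum]
  have hstep : ∀ j ∈ Finset.range n,
      ∑ k ∈ Finset.range n, ((a j : ℂ) * E (-(j:ℤ))) * ((a k : ℂ) * E (k:ℤ))
      = ∑ t ∈ Finset.range n, ((a j : ℂ) * (a ((j + t) % n) : ℂ)) * E (t : ℤ) := by
    intro j _
    have hshift := sum_shift n j (fun k => ((a j : ℂ) * E (-(j:ℤ))) * ((a k : ℂ) * E (k:ℤ)))
    rw [← hshift]
    refine Finset.sum_congr rfl fun t _ => ?_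
    have hmd : ((((j + t) % n : ℕ)) : ℤ) + (n : ℤ) * (((j + t) / n : ℕ) : ℤ) = (j : ℤ) + (t : ℤ) := by
      exact_mod_cast Nat.mod_add_div (j + t) n
    have : E (-(j:ℤ)) * E (((j + t) % n : ℕ) : ℤ) = E (t : ℤ) := by
      rw [← hE_add]
      have harg : -(j:ℤ) + (((j + t) % n : ℕ) : ℤ) = (t : ℤ) + (n:ℤ) * (-(((j+t)/n : ℕ) : ℤ)) := by
        linear_combination hmd
      rw [harg, hE_shift]
    calc ((a j : ℂ) * E (-(j:ℤ))) * ((a ((j + t) % n) : ℂ) * E (((j + t) % n : ℕ) : ℤ))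
        = ((a j : ℂ) * (a ((j + t) % n) : ℂ)) * (E (-(j:ℤ)) * E (((j + t) % n : ℕ) : ℤ)) := by ring
      _ = ((a j : ℂ) * (a ((j + t) % n) : ℂ)) * E (t : ℤ) := by rw [this]
  rw [Finset.sum_congr rfl hstep, Finset.sum_comm]
  refine Finset.sum_congr rfl fun t _ => ?_
  rw [← Finset.sum_mul]
  congr 1
  unfold paf
  push_cast
  rfl

theorem psd_test_one (n : ℕ) (a : ℕ → ℤ)
    (hsa : SymmSeq n a) (hpa : PMOne n a)
    (s : ℤ) (hs : psd n a s > 4 * n) :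
    ¬ ∃ b c d : ℕ → ℤ, IsWilliamson n a b c d := by
  rintro ⟨b, c, d, hw⟩
  rcases Nat.eq_zero_or_pos n with h0 | hpos
  · subst h0
    simp [psd, dft] at hs
  · haveI : NeZero n := ⟨hpos.ne'⟩
    obtain ⟨hsa', hsb, hsc, hsd, hpa', hpb, hpc, hpd, hpaf⟩ := hw
    have hsum0 : ∀ t, 1 ≤ t → t < n →
        paf n a t + paf n b t + paf n c t + paf n d t = 0 := by
      intro t ht1 ht2
      by_cases hle : t ≤ n / 2
      · exact hpaf t ht1 hle
      · have h1 : 1 ≤ n - t := by omega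
        have h2 : n - t ≤ n / 2 := by omega
        have h3 := hpaf (n - t) h1 h2
        rwa [paf_reflect n a t ht1 ht2, paf_reflect n b t ht1 ht2,
          paf_reflect n c t ht1 ht2, paf_reflect n d t ht1 ht2] at h3
    have hC : ((psd n a s + psd n b s + psd n c s + psd n d s : ℝ) : ℂ) = (4 * n : ℂ) := by
      push_cast
      rw [psd_eq n a s, psd_eq n b s, psd_eq n c s, psd_eq n d s,
        ← Finset.sum_add_distrib, ← Finset.sum_add_distrib, ← Finset.sum_add_distrib]
      have hterm : ∀ t ∈ Finset.range n, (fun t =>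
          (paf n a t : ℂ) * Complex.exp (2 * Real.pi * Complex.I * t * s / n)
          + (paf n b t : ℂ) * Complex.exp (2 * Real.pi * Complex.I * t * s / n)
          + (paf n c t : ℂ) * Complex.exp (2 * Real.pi * Complex.I * t * s / n)
          + (paf n d t : ℂ) * Complex.exp (2 * Real.pi * Complex.I * t * s / n)) t
          = (fun t => ((paf n a t + paf n b t + paf n c t + paf n d t : ℤ) : ℂ)
              * Complex.exp (2 * Real.pi * Complex.I * t * s / n)) t := by
        intro t _
        push_cast
        ring
      rw [Finset.sum_congr rfl hterm]
      rw [Finset.sum_eq_single 0]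
      · rw [paf_zero n a hpa, paf_zero n b hpb, paf_zero n c hpc, paf_zero n d hpd]
        push_cast
        norm_num
        ring
      · intro t ht htne
        rw [hsum0 t (Nat.one_le_iff_ne_zero.mpr htne) (Finset.mem_range.mp ht)]
        simp
      · intro h0
        exact absurd (Finset.mem_range.mpr hpos) h0
    have hR : psd n a s + psd n b s + psd n c s + psd n d s = 4 * n := by
      exact_mod_cast hC
    have hb : 0 ≤ psd n b s := sq_nonneg _
    have hc : 0 ≤ psd n c s := sq_nonneg _
    have hd : 0 ≤ psd n d s := sq_nonneg _
    linarith
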